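/- Let m be a multiplicity pattern of degree d and A_m the closure of the locus of monic degree-d polynomials with root multiplicity pattern m. Then the complement A_m \ A_m° is the union of the sets A_{m'} over all strict degenerations m' of m. -/

import Mathlib

open Polynomial

/-- `a ∈ ℂ^d` (the coefficient vector of the monic polynomial
`X^d + Σᵢ aᵢ X^{d-(i+1)}`) realizes the multiplicity pattern `m = (m₁,…,m_l)` if the
polynomial equals `∏ᵢ (X − zᵢ)^{mᵢ}` for some pairwise distinct roots `z₁,…,z_l`. -/
def realizesPattern {d l : ℕ} (m : Fin l → ℕ) (a : Fin d → ℂ) : Prop :=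
  ∃ z : Fin l → ℂ, Function.Injective z ∧
    (∏ i, (X - C (z i)) ^ (m i)) =
      X ^ d + ∑ i : Fin d, C (a i) * X ^ (d - ((i : ℕ) + 1))

/-- The locus `A_m°` of monic degree-`d` polynomials (identified with their
coefficient vectors in `ℂ^d`) with root-multiplicity pattern exactly `m`. -/
def Acirc (d l : ℕ) (m : Fin l → ℕ) : Set (Fin d → ℂ) := {a | realizesPattern m a}

/-- The Zariski closure `A_m` of `A_m°`. -/
def Abar (d l : ℕ) (m : Fin l → ℕ) : Set (Fin d → ℂ) :=
  MvPolynomial.zeroLocus ℂ (MvPolynomial.vanishingIdeal ℂ (Acirc d l m))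



section Base
variable {R : Type*} [CommRing R]

theorem coeff_stdform {d : ℕ} (a : Fin d → R) (i : Fin d) :
    (X ^ d + ∑ j : Fin d, C (a j) * X ^ (d - ((j : ℕ) + 1))).coeff (d - ((i : ℕ) + 1)) = a i := by
  have hi := i.isLt
  rw [coeff_add, coeff_X_pow, if_neg (by omega), finset_sum_coeff]
  rw [Finset.sum_eq_single i]
  · simp [coeff_C_mul, coeff_X_pow]
  · intro j _ hj
    have hjlt := j.isLt
    rw [coeff_C_mul, coeff_X_pow, if_neg (by
      intro h; exact hj (Fin.ext (by omega))), mul_zero]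
  · simp

theorem monic_expand {d : ℕ} {p : R[X]} (hm : p.Monic) (hd : p.natDegree = d) :
    p = X ^ d + ∑ i : Fin d, C (p.coeff (d - ((i : ℕ) + 1))) * X ^ (d - ((i : ℕ) + 1)) := by
  ext n
  rcases lt_trichotomy n d with h | h | h
  · rw [coeff_add, coeff_X_pow, if_neg (by omega), finset_sum_coeff, zero_add,
      Finset.sum_eq_single (⟨d - 1 - n, by omega⟩ : Fin d)]
    · simp only [coeff_C_mul, coeff_X_pow]
      rw [if_pos (by omega), mul_one]
      congr 1
      omega
    · intro j _ hj
      have hjlt := j.isLt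
      rw [coeff_C_mul, coeff_X_pow, if_neg (by
        intro hc; exact hj (Fin.ext (by simp; omega))), mul_zero]
    · simp
  · subst h
    rw [coeff_add, coeff_X_pow, if_pos rfl, ← hd, hm.coeff_natDegree, finset_sum_coeff]
    rw [Finset.sum_eq_zero, add_zero]
    intro j _
    have hjlt := j.isLt
    rw [coeff_C_mul, coeff_X_pow, if_neg (by omega), mul_zero]
  · rw [coeff_add, coeff_X_pow, if_neg (by omega), finset_sum_coeff,
      coeff_eq_zero_of_natDegree_lt (by omega), Finset.sum_eq_zero, add_zero]
    intro j _
    have hjlt := j.isLt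
    rw [coeff_C_mul, coeff_X_pow, if_neg (by omega), mul_zero]

theorem prodpow_monic [Nontrivial R] {l : ℕ} (m : Fin l → ℕ) (z : Fin l → R) :
    (∏ k, (X - C (z k)) ^ (m k)).Monic :=
  monic_prod_of_monic _ _ fun k _ => (monic_X_sub_C (z k)).pow (m k)

theorem prodpow_natDegree [Nontrivial R] {l : ℕ} (m : Fin l → ℕ) (z : Fin l → R) :
    (∏ k, (X - C (z k)) ^ (m k)).natDegree = ∑ k, m k := by
  rw [natDegree_prod_of_monic _ _ fun k _ => (monic_X_sub_C (z k)).pow (m k)]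
  exact Finset.sum_congr rfl fun k _ => by rw [(monic_X_sub_C (z k)).natDegree_pow, natDegree_X_sub_C, mul_one]

end Base



theorem aeval_eq_eval' {τ : Type*} (x : τ → ℂ) (p : MvPolynomial τ ℂ) :
    MvPolynomial.aeval x p = MvPolynomial.eval x p :=
  RingHom.congr_fun (MvPolynomial.coe_aeval_eq_eval x) p

noncomputable def Phi (d : ℕ) {l : ℕ} (m : Fin l → ℕ) (z : Fin l → ℂ) : Fin d → ℂ :=
  fun i => (∏ k, (X - C (z k)) ^ (m k)).coeff (d - ((i : ℕ) + 1))

theorem prod_eq_iff_Phi {d l : ℕ} {m : Fin l → ℕ} (hsum : ∑ k, m k = d)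
    (z : Fin l → ℂ) (a : Fin d → ℂ) :
    (∏ k, (X - C (z k)) ^ (m k)) =
      X ^ d + ∑ i : Fin d, C (a i) * X ^ (d - ((i : ℕ) + 1)) ↔ Phi d m z = a := by
  constructor
  · intro h
    funext i
    rw [Phi, h, coeff_stdform]
  · intro h
    subst h
    exact monic_expand (prodpow_monic m z) (by rw [prodpow_natDegree, hsum])

theorem realizesPattern_iff {d l : ℕ} {m : Fin l → ℕ} (hsum : ∑ k, m k = d) (a : Fin d → ℂ) :
    realizesPattern m a ↔ ∃ z, Function.Injective z ∧ Phi d m z = a := by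
  unfold realizesPattern
  refine exists_congr fun z => and_congr_right fun _ => prod_eq_iff_Phi hsum z a

/-- the universal product polynomial -/
noncomputable def univP {l : ℕ} (m : Fin l → ℕ) : Polynomial (MvPolynomial (Fin l) ℂ) :=
  ∏ k, (X - C (MvPolynomial.X k)) ^ (m k)

/-- the universal coefficient polynomials -/
noncomputable def cpoly (d : ℕ) {l : ℕ} (m : Fin l → ℕ) (i : Fin d) : MvPolynomial (Fin l) ℂ :=
  (univP m).coeff (d - ((i : ℕ) + 1))

/-- the comorphism of Φ -/
noncomputable def psi (d : ℕ) {l : ℕ} (m : Fin l → ℕ) :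
    MvPolynomial (Fin d) ℂ →ₐ[ℂ] MvPolynomial (Fin l) ℂ :=
  MvPolynomial.aeval (cpoly d m)

theorem eval_cpoly {d l : ℕ} (m : Fin l → ℕ) (z : Fin l → ℂ) (i : Fin d) :
    MvPolynomial.eval z (cpoly d m i) = Phi d m z i := by
  rw [cpoly, Phi, ← coeff_map]
  congr 1
  rw [univP, Polynomial.map_prod]
  refine Finset.prod_congr rfl fun k _ => ?_
  rw [Polynomial.map_pow, Polynomial.map_sub, map_X, map_C, MvPolynomial.eval_X]

theorem eval_psi {d l : ℕ} (m : Fin l → ℕ) (z : Fin l → ℂ) (f : MvPolynomial (Fin d) ℂ) :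
    MvPolynomial.eval z (psi d m f) = MvPolynomial.eval (Phi d m z) f := by
  rw [← aeval_eq_eval' z, psi, MvPolynomial.comp_aeval_apply]
  rw [show (fun i => MvPolynomial.aeval z (cpoly d m i)) = Phi d m z from
    funext fun i => by rw [aeval_eq_eval', eval_cpoly]]
  exact aeval_eq_eval' _ _


theorem psi_vanishing {d l : ℕ} {m : Fin l → ℕ} (hsum : ∑ k, m k = d)
    (f : MvPolynomial (Fin d) ℂ) (hf : f ∈ MvPolynomial.vanishingIdeal ℂ (Acirc d l m)) :
    psi d m f = 0 := by
  set D : MvPolynomial (Fin l) ℂ :=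
    ∏ p ∈ Finset.univ.offDiag, (MvPolynomial.X p.1 - MvPolynomial.X p.2) with hD
  have hDne : D ≠ 0 := by
    rw [hD]
    refine Finset.prod_ne_zero_iff.mpr fun p hp => sub_ne_zero.mpr fun h => ?_
    exact (Finset.mem_offDiag.mp hp).2.2 (MvPolynomial.X_injective h)
  have hmul : psi d m f * D = 0 := by
    apply MvPolynomial.funext
    intro z
    rw [map_zero, map_mul]
    by_cases hz : Function.Injective z
    · have hmem : Phi d m z ∈ Acirc d l m :=
        (realizesPattern_iff hsum _).mpr ⟨z, hz, rfl⟩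
      rw [eval_psi, ← aeval_eq_eval', hf _ hmem, zero_mul]
    · obtain ⟨i, j, hij, hne⟩ := Function.not_injective_iff.mp hz
      have : MvPolynomial.eval z D = 0 := by
        rw [hD, map_prod]
        refine Finset.prod_eq_zero (i := (i, j)) (Finset.mem_offDiag.mpr
          ⟨Finset.mem_univ i, Finset.mem_univ j, hne⟩) ?_
        simp [hij]
      rw [this, mul_zero]
  rcases mul_eq_zero.mp hmul with h | h
  · exact h
  · exact absurd h hDne

theorem range_Phi_subset_Abar {d l : ℕ} {m : Fin l → ℕ} (hsum : ∑ k, m k = d) :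
    Set.range (Phi d m) ⊆ Abar d l m := by
  rintro _ ⟨z, rfl⟩ f hf
  rw [aeval_eq_eval', ← eval_psi, psi_vanishing hsum f hf, map_zero]

theorem Abar_subset_range {d l : ℕ} {m : Fin l → ℕ} (hpos : ∀ i, 0 < m i)
    (hsum : ∑ k, m k = d) : Abar d l m ⊆ Set.range (Phi d m) := by
  intro a ha
  letI : Algebra (MvPolynomial (Fin d) ℂ) (MvPolynomial (Fin l) ℂ) :=
    (psi d m).toRingHom.toAlgebra
  have halg : ∀ x : MvPolynomial (Fin d) ℂ,
      algebraMap (MvPolynomial (Fin d) ℂ) (MvPolynomial (Fin l) ℂ) x = psi d m x := fun _ => rfl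
  have huMonic : (univP m).Monic := prodpow_monic m _
  have huDeg : (univP m).natDegree = d := by rw [univP, prodpow_natDegree, hsum]
  -- each X k is integral
  have hX : ∀ k : Fin l, IsIntegral (MvPolynomial (Fin d) ℂ) (MvPolynomial.X k :
      MvPolynomial (Fin l) ℂ) := by
    intro k
    have hd : 0 < d := by
      have := hpos k
      have hle : m k ≤ ∑ j, m j := Finset.single_le_sum (fun j _ => Nat.zero_le _)
        (Finset.mem_univ k)
      omega
    refine ⟨X ^ d + ∑ i : Fin d, C (MvPolynomial.X i) * X ^ (d - ((i : ℕ) + 1)), ?_, ?_⟩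
    · apply monic_X_pow_add
      refine lt_of_le_of_lt (degree_sum_le _ _) ?_
      rw [Finset.sup_lt_iff (by exact_mod_cast WithBot.bot_lt_coe d)]
      intro i _
      refine lt_of_le_of_lt (degree_C_mul_X_pow_le _ _) ?_
      exact_mod_cast Nat.sub_lt_of_pos_le (Nat.succ_pos _) i.isLt
    · rw [Polynomial.eval₂_eq_eval_map]
      have hmap : Polynomial.map
          (algebraMap (MvPolynomial (Fin d) ℂ) (MvPolynomial (Fin l) ℂ))
          (X ^ d + ∑ i : Fin d, C (MvPolynomial.X i) * X ^ (d - ((i : ℕ) + 1)))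
          = univP m := by
        rw [Polynomial.map_add, Polynomial.map_pow, map_X, Polynomial.map_sum]
        rw [monic_expand huMonic huDeg]
        congr 1
        refine Finset.sum_congr rfl fun i _ => ?_
        rw [Polynomial.map_mul, Polynomial.map_pow, map_X, map_C, halg, psi,
          MvPolynomial.aeval_X, cpoly]
      rw [hmap, univP, Polynomial.eval_prod]
      refine Finset.prod_eq_zero (Finset.mem_univ k) ?_
      rw [Polynomial.eval_pow, Polynomial.eval_sub, Polynomial.eval_X, Polynomial.eval_C,
        sub_self]
      exact zero_pow (hpos k).ne'
  haveI hint : Algebra.IsIntegral (MvPolynomial (Fin d) ℂ) (MvPolynomial (Fin l) ℂ) := by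
    rw [Algebra.isIntegral_def]
    intro s
    refine MvPolynomial.induction_on s (fun c => ?_) (fun p q hp hq => hp.add hq)
      (fun p k hp => hp.mul (hX k))
    have : (MvPolynomial.C c : MvPolynomial (Fin l) ℂ)
        = algebraMap (MvPolynomial (Fin d) ℂ) (MvPolynomial (Fin l) ℂ) (MvPolynomial.C c) := by
      rw [halg, psi, MvPolynomial.aeval_C]
      rfl
    rw [this]
    exact isIntegral_algebraMap
  have hker : RingHom.ker (algebraMap (MvPolynomial (Fin d) ℂ) (MvPolynomial (Fin l) ℂ))
      ≤ MvPolynomial.vanishingIdeal ℂ {a} := by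
    intro f hf
    rw [RingHom.mem_ker, halg] at hf
    have hvan : f ∈ MvPolynomial.vanishingIdeal ℂ (Acirc d l m) := by
      intro x hx
      obtain ⟨z, -, rfl⟩ := (realizesPattern_iff hsum x).mp hx
      rw [aeval_eq_eval', ← eval_psi, hf, map_zero]
    rw [MvPolynomial.mem_vanishingIdeal_singleton_iff]
    exact ha f hvan
  obtain ⟨Q, hQmax, hQ⟩ :=
    Ideal.exists_ideal_over_maximal_of_isIntegral (MvPolynomial.vanishingIdeal ℂ {a}) hker
  obtain ⟨z, rfl⟩ := (MvPolynomial.isMaximal_iff_eq_vanishingIdeal_singleton (I := Q)).mp hQmax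
  refine ⟨z, funext fun i => ?_⟩
  have hmem : (MvPolynomial.X i - MvPolynomial.C (a i)) ∈ MvPolynomial.vanishingIdeal ℂ {a} := by
    rw [MvPolynomial.mem_vanishingIdeal_singleton_iff, aeval_eq_eval', map_sub, MvPolynomial.eval_X,
      MvPolynomial.eval_C, sub_self]
  rw [← hQ, Ideal.mem_comap, halg, map_sub, psi, MvPolynomial.aeval_X, MvPolynomial.aeval_C,
    MvPolynomial.mem_vanishingIdeal_singleton_iff, aeval_eq_eval', map_sub, eval_cpoly] at hmem
  have : MvPolynomial.eval z (algebraMap ℂ (MvPolynomial (Fin l) ℂ) (a i)) = a i := by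
    simp
  rw [this] at hmem
  exact sub_eq_zero.mp hmem

theorem Abar_eq_range {d l : ℕ} {m : Fin l → ℕ} (hpos : ∀ i, 0 < m i)
    (hsum : ∑ k, m k = d) : Abar d l m = Set.range (Phi d m) :=
  le_antisymm (Abar_subset_range hpos hsum) (range_Phi_subset_Abar hsum)


theorem regroup {l l' : ℕ} (m : Fin l → ℕ) (φ : Fin l → Fin l') (m' : Fin l' → ℕ)
    (hm' : ∀ i, m' i = ∑ j ∈ Finset.univ.filter (fun j => φ j = i), m j) (w : Fin l' → ℂ) :
    ∏ j, (X - C (w (φ j))) ^ (m j) = ∏ i, (X - C (w i)) ^ (m' i) := by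
  rw [← Finset.prod_fiberwise Finset.univ φ (fun j => (X - C (w (φ j))) ^ (m j))]
  refine Finset.prod_congr rfl fun i _ => ?_
  rw [hm', ← Finset.prod_pow_eq_pow_sum]
  refine Finset.prod_congr rfl fun j hj => ?_
  rw [(Finset.mem_filter.mp hj).2]

theorem Phi_regroup {d l l' : ℕ} (m : Fin l → ℕ) (φ : Fin l → Fin l') (m' : Fin l' → ℕ)
    (hm' : ∀ i, m' i = ∑ j ∈ Finset.univ.filter (fun j => φ j = i), m j) (w : Fin l' → ℂ) :
    Phi d m (w ∘ φ) = Phi d m' w := by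
  funext i
  unfold Phi
  rw [show (∏ k, (X - C ((w ∘ φ) k)) ^ (m k)) = ∏ k, (X - C (w (φ k))) ^ (m k) from rfl,
    regroup m φ m' hm' w]

theorem sum_m' {l l' : ℕ} (m : Fin l → ℕ) (φ : Fin l → Fin l') (m' : Fin l' → ℕ)
    (hm' : ∀ i, m' i = ∑ j ∈ Finset.univ.filter (fun j => φ j = i), m j) :
    ∑ i, m' i = ∑ j, m j := by
  rw [← Finset.sum_fiberwise Finset.univ φ m]
  exact Finset.sum_congr rfl fun i _ => hm' i

theorem not_mem_Acirc {d l l' : ℕ} {m : Fin l → ℕ} {m' : Fin l' → ℕ}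
    (hpos : ∀ i, 0 < m i) (hsum : ∑ k, m k = d) (hsum' : ∑ k, m' k = d) (hl : l' < l)
    {a : Fin d → ℂ} (ha' : a ∈ Set.range (Phi d m')) : a ∉ Acirc d l m := by
  intro ha
  obtain ⟨z, hz, hPz⟩ := (realizesPattern_iff hsum a).mp ha
  obtain ⟨w, rfl⟩ := ha'
  have hP : ∏ j, (X - C (z j)) ^ (m j) = ∏ i, (X - C (w i)) ^ (m' i) := by
    rw [(prod_eq_iff_Phi hsum z _).mpr hPz, (prod_eq_iff_Phi hsum' w _).mpr rfl]
  have hsubset : (Finset.univ.image z) ⊆ Finset.univ.image w := by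
    intro x hx
    obtain ⟨j, -, rfl⟩ := Finset.mem_image.mp hx
    have hzero : Polynomial.eval (z j) (∏ i, (X - C (w i)) ^ (m' i)) = 0 := by
      rw [← hP, Polynomial.eval_prod]
      refine Finset.prod_eq_zero (Finset.mem_univ j) ?_
      rw [Polynomial.eval_pow, Polynomial.eval_sub, Polynomial.eval_X, Polynomial.eval_C,
        sub_self]
      exact zero_pow (hpos j).ne'
    rw [Polynomial.eval_prod, Finset.prod_eq_zero_iff] at hzero
    obtain ⟨i, -, hi⟩ := hzero
    rw [Polynomial.eval_pow, Polynomial.eval_sub, Polynomial.eval_X, Polynomial.eval_C,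
      pow_eq_zero_iff'] at hi
    have : z j = w i := sub_eq_zero.mp hi.1
    rw [this]
    exact Finset.mem_image_of_mem w (Finset.mem_univ i)
  have h1 : (Finset.univ.image z).card = l := by
    rw [Finset.card_image_of_injective _ hz, Finset.card_univ, Fintype.card_fin]
  have h2 : (Finset.univ.image w).card ≤ l' := by
    refine le_trans (Finset.card_image_le) ?_
    rw [Finset.card_univ, Fintype.card_fin]
  have := Finset.card_le_card hsubset
  omega

/-- For a multiplicity pattern `m` of degree `d`, the complement `A_m \ A_m°` is the
union of the `A_{m'}` over all strict degenerations `m'` of `m` (patterns obtained by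
summing the parts of `m` along a surjection onto a strictly shorter index set). -/
theorem pattern_closure_boundary (d l : ℕ) (m : Fin l → ℕ)
    (hpos : ∀ i, 0 < m i) (hmono : Antitone m) (hsum : ∑ i, m i = d) :
    Abar d l m \ Acirc d l m =
      ⋃ (l' : ℕ) (m' : Fin l' → ℕ) (φ : Fin l → Fin l') (_ : Function.Surjective φ)
        (_ : ∀ i, m' i = ∑ j ∈ Finset.univ.filter (fun j => φ j = i), m j)
        (_ : l' < l),
        Abar d l' m' := by
  ext a
  simp only [Set.mem_diff, Set.mem_iUnion]
  constructor
  · rintro ⟨haAbar, haN⟩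
    rw [Abar_eq_range hpos hsum] at haAbar
    obtain ⟨z, rfl⟩ := haAbar
    set t : Finset ℂ := Finset.univ.image z with ht
    set l' : ℕ := t.card with hl'
    set e : t ≃ Fin l' := t.equivFin with he
    set w : Fin l' → ℂ := fun i => ((e.symm i : t) : ℂ) with hw
    set φ : Fin l → Fin l' := fun j => e ⟨z j, Finset.mem_image_of_mem z (Finset.mem_univ j)⟩
      with hφ
    have hwφ : ∀ j, w (φ j) = z j := by
      intro j
      rw [hw, hφ]
      simp
    have hφsurj : Function.Surjective φ := by
      intro i
      obtain ⟨j, -, hj⟩ := Finset.mem_image.mp (e.symm i).2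
      refine ⟨j, ?_⟩
      show e ⟨z j, Finset.mem_image_of_mem z (Finset.mem_univ j)⟩ = i
      have : (⟨z j, Finset.mem_image_of_mem z (Finset.mem_univ j)⟩ : t) = e.symm i :=
        Subtype.ext hj
      rw [this, Equiv.apply_symm_apply]
    set m' : Fin l' → ℕ := fun i => ∑ j ∈ Finset.univ.filter (fun j => φ j = i), m j with hm'
    have hsum' : ∑ i, m' i = d := by rw [sum_m' m φ m' (fun _ => rfl), hsum]
    have hz : z = w ∘ φ := funext fun j => (hwφ j).symm
    have hreg : Phi d m z = Phi d m' w := by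
      rw [hz]; exact Phi_regroup m φ m' (fun _ => rfl) w
    have hle : l' ≤ l := by
      rw [hl', ht]
      refine le_trans (Finset.card_image_le) ?_
      rw [Finset.card_univ, Fintype.card_fin]
    have hlt : l' < l := by
      rcases lt_or_eq_of_le hle with h | h
      · exact h
      · exfalso
        have hinj : Function.Injective z := by
          have hcard : (Finset.univ.image z).card = l := by rw [← ht, ← hl', h]
          have hIn := Finset.card_image_iff.mp
            (by rw [hcard, Finset.card_univ, Fintype.card_fin] :
              (Finset.univ.image z).card = Finset.univ.card)
          rw [Finset.coe_univ] at hIn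
          exact fun x y hxy => hIn (Set.mem_univ x) (Set.mem_univ y) hxy
        exact haN ((realizesPattern_iff hsum _).mpr ⟨z, hinj, rfl⟩)
    refine ⟨l', m', φ, hφsurj, fun _ => rfl, hlt, ?_⟩
    rw [hreg]
    exact range_Phi_subset_Abar hsum' ⟨w, rfl⟩
  · rintro ⟨l', m', φ, hφsurj, hm', hlt, hmem⟩
    have hpos' : ∀ i, 0 < m' i := by
      intro i
      rw [hm']
      obtain ⟨j, hj⟩ := hφsurj i
      exact Finset.sum_pos (fun j _ => hpos j)
        ⟨j, Finset.mem_filter.mpr ⟨Finset.mem_univ j, hj⟩⟩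
    have hsum' : ∑ i, m' i = d := by rw [sum_m' m φ m' hm', hsum]
    rw [Abar_eq_range hpos' hsum'] at hmem
    obtain ⟨w, rfl⟩ := hmem
    constructor
    · refine range_Phi_subset_Abar hsum ⟨w ∘ φ, ?_⟩
      exact Phi_regroup m φ m' hm' w
    · exact not_mem_Acirc hpos hsum hsum' hlt ⟨w, rfl⟩
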